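/- arXiv:1505.04776 — 6 statements merged into one kernel-verified Lean document; each statement's English description precedes it below -/
import Mathlib

section
/- Let X be a Banach space and F a closed convex subset of the dual unit ball B_{X*} with the weak* topology. Then F does not admit a family (V_α)_{α<ω₁} of open subsets of F, indexed by the first uncountable ordinal, such that closure(V_α) ⊆ V_β whenever α < β < ω₁ and the family is strictly increasing. -/
open Cardinal

/-- Proposition 3.1: a closed convex subset `F` of the dual unit ball of a Banach space
with the weak* topology admits no strictly increasing ω₁-chain `(V_α)_{α<ω₁}` of open
subsets of `F` with `closure (V_α) ⊆ V_β` for `α < β < ω₁`. -/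
theorem stmt6 {X : Type*} [NormedAddCommGroup X] [NormedSpace ℝ X] [CompleteSpace X]
    (F : Set (WeakDual ℝ X))
    (hFB : F ⊆ {φ : WeakDual ℝ X | ‖WeakDual.toStrongDual φ‖ ≤ 1})
    (hFclosed : IsClosed F) (hFconv : Convex ℝ F) :
    ¬ ∃ V : Ordinal → Set F,
      (∀ α < (aleph 1).ord, IsOpen (V α)) ∧
      (∀ α β : Ordinal, α < β → β < (aleph 1).ord → closure (V α) ⊆ V β) ∧
      (∀ α β : Ordinal, α < β → β < (aleph 1).ord → V α ⊂ V β) := by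
  rintro ⟨V, hopen, hclos, hssub⟩
  set ω₁ := (aleph 1).ord with hω₁def
  have hlim : Order.IsSuccLimit ω₁ := Cardinal.isSuccLimit_ord (aleph0_le_aleph 1)
  have hsucc : ∀ {a : Ordinal}, a < ω₁ → a + 1 < ω₁ := by
    intro a ha
    rw [Ordinal.add_one_eq_succ]
    exact hlim.succ_lt ha
  have hself : ∀ a : Ordinal, a < a + 1 := by
    intro a
    rw [Ordinal.add_one_eq_succ]
    exact Order.lt_succ a
  have h1lt : (1 : Ordinal) < ω₁ := by
    rw [hω₁def, Cardinal.lt_ord]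
    simpa using (Cardinal.one_lt_aleph0.trans Cardinal.aleph0_lt_aleph_one)
  -- `F` is weak*-compact (Banach–Alaoglu)
  have hball := WeakDual.isCompact_closedBall (𝕜 := ℝ) (E := X) 0 1
  have hFsub : F ⊆ WeakDual.toStrongDual ⁻¹' Metric.closedBall 0 1 := by
    intro φ hφ
    simpa [Metric.mem_closedBall, dist_zero_right] using hFB hφ
  have hFcomp : IsCompact F := hball.of_isClosed_subset hFclosed hFsub
  haveI : CompactSpace F := isCompact_iff_compactSpace.mp hFcomp
  -- a point `p ∈ V 1`
  obtain ⟨p, hp1, -⟩ := Set.exists_of_ssubset (hssub 0 1 zero_lt_one h1lt)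
  -- jump points `y β ∈ V (β+1) \ V β`
  have hy' : ∀ β : Ordinal, ∃ z : F, β < ω₁ → z ∈ V (β + 1) ∧ z ∉ V β := by
    intro β
    by_cases hβ : β < ω₁
    · obtain ⟨z, hz1, hz2⟩ := Set.exists_of_ssubset (hssub β (β + 1) (hself β) (hsucc hβ))
      exact ⟨z, fun _ => ⟨hz1, hz2⟩⟩
    · exact ⟨p, fun h => absurd h hβ⟩
  choose y hy using hy'
  -- a cluster point `u` of the tails: it avoids every `V α`
  have hT : (⋂ i : {α : Ordinal // α < ω₁},
      closure (y '' {β | i.1 ≤ β ∧ β < ω₁})).Nonempty := by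
    haveI : Nonempty {α : Ordinal // α < ω₁} := ⟨⟨0, h1lt.trans_le' zero_le_one⟩⟩
    apply IsCompact.nonempty_iInter_of_directed_nonempty_isCompact_isClosed
    · intro i j
      refine ⟨⟨max i.1 j.1, max_lt i.2 j.2⟩, ?_, ?_⟩ <;>
        · apply closure_mono
          apply Set.image_mono
          intro β hβ
          exact ⟨le_trans (by simp) hβ.1, hβ.2⟩
    · intro i
      exact ⟨y i.1, subset_closure ⟨i.1, ⟨le_rfl, i.2⟩, rfl⟩⟩
    · intro i
      exact isClosed_closure.isCompact
    · intro i
      exact isClosed_closure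
  obtain ⟨u, hu⟩ := hT
  have huV : ∀ γ : Ordinal, γ < ω₁ → u ∉ V γ := by
    intro γ hγ
    have humem : u ∈ closure (y '' {β | γ ≤ β ∧ β < ω₁}) :=
      Set.mem_iInter.mp hu ⟨γ, hγ⟩
    have hsub : y '' {β | γ ≤ β ∧ β < ω₁} ⊆ (V γ)ᶜ := by
      rintro _ ⟨β, ⟨hβ1, hβ2⟩, rfl⟩
      intro hmem
      rcases hβ1.lt_or_eq with h | h
      · exact (hy β hβ2).2 ((hssub γ β h hβ2).subset hmem)
      · exact (hy β hβ2).2 (h ▸ hmem)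
    exact fun hmem => closure_minimal hsub (hopen γ hγ).isClosed_compl humem hmem
  -- the segment from `p` to `u` lies in `F`
  set ψ : ℝ → WeakDual ℝ X := fun t => (1 - t) • (p : WeakDual ℝ X) + t • (u : WeakDual ℝ X)
    with hψdef
  have hψF : ∀ t : ℝ, t ∈ Set.Icc (0 : ℝ) 1 → ψ t ∈ F := by
    intro t ht
    exact hFconv p.2 u.2 (sub_nonneg.mpr ht.2) ht.1 (by ring)
  have hψc : Continuous ψ := by
    apply WeakDual.continuous_of_continuous_eval
    intro x
    have : (fun t : ℝ => (ψ t) x)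
        = fun t : ℝ => (1 - t) * ((p : WeakDual ℝ X) x) + t * ((u : WeakDual ℝ X) x) := rfl
    rw [this]
    fun_prop
  -- the trace of the chain on the segment
  set Φ : (Set.Icc (0 : ℝ) 1) → F := fun t => ⟨ψ t.1, hψF t.1 t.2⟩ with hΦdef
  have hΦc : Continuous Φ := Continuous.subtype_mk (hψc.comp continuous_subtype_val) _
  haveI : ConnectedSpace (Set.Icc (0 : ℝ) 1) :=
    Subtype.connectedSpace (isConnected_Icc zero_le_one)
  set O : Set (Set.Icc (0 : ℝ) 1) := ⋃ (α : Ordinal) (_ : α < ω₁), Φ ⁻¹' (V α) with hOdef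
  have hOopen : IsOpen O :=
    isOpen_iUnion fun α => isOpen_iUnion fun hα => (hopen α hα).preimage hΦc
  have hOclosed : IsClosed O := by
    apply isClosed_of_closure_subset
    intro t ht
    obtain ⟨x, hx, hxt⟩ := mem_closure_iff_seq_limit.mp ht
    have hx' : ∀ n : ℕ, ∃ α : Ordinal, ∃ _ : α < ω₁, x n ∈ Φ ⁻¹' (V α) := by
      intro n
      exact Set.mem_iUnion₂.mp (hx n)
    choose β hβ hxV using hx'
    set α' : Ordinal := ⨆ n, β n with hα'def
    have hα' : α' < ω₁ := by
      apply Ordinal.iSup_lt_ord_lift _ hβ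
      rw [Cardinal.isRegular_aleph_one.cof_eq]
      simpa using Cardinal.aleph0_lt_aleph_one
    have hxV' : ∀ n : ℕ, x n ∈ Φ ⁻¹' (V α') := by
      intro n
      have hle : β n ≤ α' := Ordinal.le_iSup β n
      rcases hle.lt_or_eq with h | h
      · exact (hssub (β n) α' h hα').subset (hxV n)
      · exact h ▸ hxV n
    have ht' : t ∈ closure (Φ ⁻¹' (V α')) :=
      mem_closure_of_tendsto hxt (Filter.Eventually.of_forall hxV')
    have ht'' : t ∈ Φ ⁻¹' (closure (V α')) := hΦc.closure_preimage_subset _ ht'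
    have : t ∈ Φ ⁻¹' (V (α' + 1)) := hclos α' (α' + 1) (hself α') (hsucc hα') ht''
    exact Set.mem_iUnion₂.mpr ⟨α' + 1, hsucc hα', this⟩
  -- `0` is in `O`, `1` is not
  have hΦ0 : Φ ⟨0, Set.mem_Icc.mpr ⟨le_refl 0, zero_le_one⟩⟩ = p := by
    apply Subtype.ext
    simp [hΦdef, hψdef]
  have hΦ1 : Φ ⟨1, Set.mem_Icc.mpr ⟨zero_le_one, le_refl 1⟩⟩ = u := by
    apply Subtype.ext
    simp [hΦdef, hψdef]
  have h0mem : (⟨0, Set.mem_Icc.mpr ⟨le_refl 0, zero_le_one⟩⟩ : Set.Icc (0 : ℝ) 1) ∈ O :=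
    Set.mem_iUnion₂.mpr ⟨1, h1lt, by rw [Set.mem_preimage, hΦ0]; exact hp1⟩
  have h1mem : (⟨1, Set.mem_Icc.mpr ⟨zero_le_one, le_refl 1⟩⟩ : Set.Icc (0 : ℝ) 1) ∉ O := by
    intro h
    obtain ⟨α, hα, hmem⟩ := Set.mem_iUnion₂.mp h
    rw [Set.mem_preimage, hΦ1] at hmem
    exact huV α hα hmem
  -- contradiction with connectedness of the interval
  rcases isClopen_iff.mp ⟨hOclosed, hOopen⟩ with h | h
  · rw [h] at h0mem
    exact h0mem
  · rw [h] at h1mem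
    exact h1mem (Set.mem_univ _)
end

section
/- Every Banach space X has countable tightness in its weak topology: if A ⊆ X and x is in the weak closure of A, then there is a countable subset D ⊆ A with x in the weak closure of D. -/
open Metric Set

/-- Characterization of membership in the weak closure: `x` is in the weak closure of `S`
iff every basic weak neighborhood of `x` (given by finitely many functionals and `ε > 0`)
meets `S`. -/
lemma weak_mem_closure_iff' {X : Type*} [NormedAddCommGroup X] [NormedSpace ℝ X]
    (S : Set (WeakSpace ℝ X)) (x : WeakSpace ℝ X) :
    x ∈ closure S ↔ ∀ (F : Finset (X →L[ℝ] ℝ)), ∀ ε > 0,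
      ∃ a ∈ S, ∀ f ∈ F, |f a - f x| < ε := by
  constructor
  · intro hx F ε hε
    have hU : IsOpen {y : WeakSpace ℝ X | ∀ f ∈ F, |f y - f x| < ε} := by
      have h1 : {y : WeakSpace ℝ X | ∀ f ∈ F, |f y - f x| < ε}
          = ⋂ f ∈ F, (fun y : WeakSpace ℝ X => f y) ⁻¹' Metric.ball (f x) ε := by
        ext y
        simp [Real.dist_eq]
      rw [h1]
      refine isOpen_biInter_finset fun f _ => ?_
      exact (WeakBilin.eval_continuous ((topDualPairing ℝ X).flip) f).isOpen_preimage _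
        Metric.isOpen_ball
    have hxU : x ∈ {y : WeakSpace ℝ X | ∀ f ∈ F, |f y - f x| < ε} := by
      intro f _; simpa using hε
    obtain ⟨a, haU, haS⟩ := _root_.mem_closure_iff.mp hx _ hU hxU
    exact ⟨a, haS, haU⟩
  · intro h
    refine closure_induced.mpr ?_
    rw [_root_.mem_closure_iff]
    intro O hO hxO
    obtain ⟨I, u, hu, hsub⟩ := isOpen_pi_iff.mp hO _ hxO
    have hδ : ∀ f ∈ I, ∃ δ > 0, Metric.ball (f x) δ ⊆ u f := by
      intro f hf
      exact Metric.isOpen_iff.mp (hu f hf).1 _ (hu f hf).2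
    choose! δ hδpos hδsub using hδ
    rcases I.eq_empty_or_nonempty with hI | hI
    · obtain ⟨a, haS, -⟩ := h ∅ 1 one_pos
      refine ⟨_, hsub ?_, Set.mem_image_of_mem _ haS⟩
      simp [hI]
    · set ε := I.inf' hI δ with hε
      have hεpos : 0 < ε := by
        rw [hε, Finset.lt_inf'_iff]
        exact fun f hf => hδpos f hf
      obtain ⟨a, haS, ha⟩ := h I ε hεpos
      refine ⟨_, hsub ?_, Set.mem_image_of_mem _ haS⟩
      intro f hf
      apply hδsub f hf
      rw [Metric.mem_ball, Real.dist_eq]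
      exact lt_of_lt_of_le (ha f hf) (Finset.inf'_le _ hf)

/-- Kaplansky's theorem: every Banach space has countable tightness in its weak
topology: if `x` lies in the weak closure of `A`, then `x` lies in the weak closure
of some countable subset of `A`. -/
theorem stmt7 {X : Type*} [NormedAddCommGroup X] [NormedSpace ℝ X] [CompleteSpace X]
    (A : Set (WeakSpace ℝ X)) (x : WeakSpace ℝ X) (hx : x ∈ closure A) :
    ∃ D ⊆ A, D.Countable ∧ x ∈ closure D := by
  classical
  have hx' := (weak_mem_closure_iff' A x).mp hx
  -- the identity map from weak-star dual to dual
  let c : WeakDual ℝ X → (X →L[ℝ] ℝ) := fun φ => φ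
  -- For each (n, k, m), use Banach–Alaoglu: n-tuples of functionals of norm ≤ m form a
  -- weak-star-compact set, covered by the open sets indexed by `a ∈ A` of those tuples
  -- for which `a` approximates `x` up to `1/(k+1)`; extract a finite subcover.
  have key : ∀ n k m : ℕ, ∃ T : Finset A,
      ∀ g : Fin n → WeakDual ℝ X, (∀ i, ‖c (g i)‖ ≤ (m : ℝ)) →
        ∃ a ∈ T, ∀ i, |(g i) ((a : WeakSpace ℝ X)) - (g i) x| < 1 / (k + 1) := by
    intro n k m
    have hε : (0 : ℝ) < 1 / (k + 1) := by positivity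
    set K : Set (Fin n → WeakDual ℝ X) :=
      Set.univ.pi fun _ => (WeakDual.toStrongDual ⁻¹'
        Metric.closedBall (0 : StrongDual ℝ X) (m : ℝ)) with hK
    have hKc : IsCompact K :=
      isCompact_univ_pi fun _ =>
        WeakDual.isCompact_closedBall (𝕜 := ℝ) (0 : StrongDual ℝ X) (m : ℝ)
    set U : A → Set (Fin n → WeakDual ℝ X) :=
      fun a => ⋂ i, (fun g => (g i) ((a : WeakSpace ℝ X)) - (g i) x) ⁻¹'
        Metric.ball 0 (1 / (k + 1)) with hU
    have hUopen : ∀ a : A, IsOpen (U a) := by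
      intro a
      refine isOpen_iInter_of_finite fun i => ?_
      have hc : Continuous fun g : Fin n → WeakDual ℝ X =>
          (g i) ((a : WeakSpace ℝ X)) - (g i) x := by
        have h1 : Continuous fun φ : WeakDual ℝ X => φ ((a : WeakSpace ℝ X)) - φ x :=
          ((WeakBilin.eval_continuous (topDualPairing ℝ X) _).sub
            (WeakBilin.eval_continuous (topDualPairing ℝ X) _))
        exact h1.comp (continuous_apply i)
      exact hc.isOpen_preimage _ Metric.isOpen_ball
    have hcover : K ⊆ ⋃ a : A, U a := by
      intro g _
      obtain ⟨a, haA, ha⟩ := hx' (Finset.image (fun i => c (g i)) Finset.univ) _ hε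
      refine Set.mem_iUnion.mpr ⟨⟨a, haA⟩, ?_⟩
      refine Set.mem_iInter.mpr fun i => ?_
      have := ha (c (g i)) (Finset.mem_image_of_mem _ (Finset.mem_univ i))
      simp [Real.dist_eq] at this ⊢; exact this
    obtain ⟨T, hT⟩ := hKc.elim_finite_subcover U hUopen hcover
    refine ⟨T, fun g hg => ?_⟩
    have hgK : g ∈ K := by
      refine Set.mem_univ_pi.mpr fun i => ?_
      simp [Metric.mem_closedBall, dist_zero_right]; exact hg i
    obtain ⟨a, ha⟩ := Set.mem_iUnion₂.mp (hT hgK)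
    obtain ⟨haT, haU⟩ := ha
    refine ⟨a, haT, fun i => ?_⟩
    have := Set.mem_iInter.mp haU i
    simpa [Real.dist_eq] using this
  choose T hT using fun nkm : ℕ × ℕ × ℕ => key nkm.1 nkm.2.1 nkm.2.2
  set D : Set (WeakSpace ℝ X) :=
    ⋃ nkm : ℕ × ℕ × ℕ, (fun a : A => (a : WeakSpace ℝ X)) '' (T nkm) with hD
  refine ⟨D, ?_, ?_, ?_⟩
  · refine Set.iUnion_subset fun nkm => ?_
    rintro y ⟨a, -, rfl⟩
    exact a.2
  · exact Set.countable_iUnion fun nkm => ((T nkm).finite_toSet.image _).countable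
  · rw [weak_mem_closure_iff']
    intro F ε hε
    obtain ⟨k, hk⟩ := exists_nat_one_div_lt hε
    obtain ⟨M, hM⟩ := Finset.exists_le (F.image fun f => ‖f‖)
    obtain ⟨m, hm⟩ := exists_nat_ge M
    set n := F.card with hn
    set g : Fin n → WeakDual ℝ X := fun i => (F.equivFin.symm i : X →L[ℝ] ℝ) with hg
    have hgnorm : ∀ i, ‖c (g i)‖ ≤ (m : ℝ) := by
      intro i
      refine le_trans ?_ hm
      exact hM _ (Finset.mem_image_of_mem _ (F.equivFin.symm i).2)
    obtain ⟨a, haT, ha⟩ := hT (n, k, m) g hgnorm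
    refine ⟨(a : WeakSpace ℝ X), Set.mem_iUnion.mpr ⟨(n, k, m), Set.mem_image_of_mem _ haT⟩,
      fun f hf => ?_⟩
    have := ha (F.equivFin ⟨f, hf⟩)
    have hfg : g (F.equivFin ⟨f, hf⟩) = (f : X →L[ℝ] ℝ) := by
      rw [hg]; simp; rfl
    rw [hfg] at this
    exact lt_trans this hk
end

section
/- If X is a Banach space of density character κ, then there exists a strictly increasing well-ordered chain (U_ξ)_{ξ<κ} of open subsets of the dual unit ball B_{X*} with the weak* topology. -/
open Cardinal Set

universe u
section Aux
variable {X : Type u} [NormedAddCommGroup X] [NormedSpace ℝ X]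

lemma aux_sep (Y : Submodule ℝ X) (hY : IsClosed (Y : Set X)) {x : X} (hx : x ∉ Y) :
    ∃ φ : X →L[ℝ] ℝ, ‖φ‖ ≤ 1 ∧ (∀ y ∈ Y, φ y = 0) ∧ 0 < φ x := by
  obtain ⟨f, u, hfu, hux⟩ := geometric_hahn_banach_closed_point Y.convex hY hx
  have hu0 : 0 < u := by simpa using hfu 0 Y.zero_mem
  have hvanish : ∀ y ∈ Y, f y = 0 := by
    intro y hy
    by_contra h
    have h1 := hfu (((u + 1) / f y) • y) (Y.smul_mem _ hy)
    rw [map_smul, smul_eq_mul, div_mul_cancel₀ _ h] at h1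
    linarith
  have hfx : 0 < f x := hu0.trans hux
  have hf0 : f ≠ 0 := fun h => by simp [h] at hfx
  refine ⟨‖f‖⁻¹ • f, ?_, ?_, ?_⟩
  · refine le_of_eq ?_
    rw [norm_smul (‖f‖⁻¹) f, norm_inv, norm_norm]
    exact inv_mul_cancel₀ (norm_ne_zero_iff.2 hf0)
  · intro y hy
    simp [hvanish y hy]
  · simpa using mul_pos (inv_pos.2 (norm_pos_iff.2 hf0)) hfx

lemma aux_small (S : Set X) :
    ∃ R : Set X, (Submodule.span ℝ S : Set X) ⊆ closure R ∧ #R ≤ max ℵ₀ #S := by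
  classical
  set g : List (ULift.{u} ℚ × S) → X :=
    fun L => (L.map fun p => (p.1.down : ℝ) • (p.2 : X)).sum with hg
  have hzero : (0 : X) ∈ Set.range g := ⟨[], rfl⟩
  have hadd : ∀ a ∈ Set.range g, ∀ b ∈ Set.range g, a + b ∈ Set.range g := by
    rintro _ ⟨L1, rfl⟩ _ ⟨L2, rfl⟩
    exact ⟨L1 ++ L2, by simp [hg]⟩
  have hqs : ∀ (q : ℚ) (L : List (ULift.{u} ℚ × S)),
      (q : ℝ) • g L = g (L.map fun p => (ULift.up (q * p.1.down), p.2)) := by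
    intro q L
    induction L with
    | nil => simp [hg]
    | cons p L ih => simp [hg, smul_add, smul_smul] at ih ⊢; rw [← ih]
  have hsmul' : ∀ (c : ℝ), ∀ x ∈ Set.range g, c • x ∈ closure (Set.range g) := by
    rintro c _ ⟨L, rfl⟩
    have hc : c ∈ closure (Set.range ((↑) : ℚ → ℝ)) := by
      rw [Rat.denseRange_cast.closure_range]; trivial
    have h1 : c • g L ∈ closure ((· • g L) '' Set.range ((↑) : ℚ → ℝ)) :=
      mem_closure_image (by fun_prop) hc
    refine closure_mono ?_ h1
    rintro _ ⟨_, ⟨q, rfl⟩, rfl⟩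
    exact ⟨_, (hqs q L).symm⟩
  let M : Submodule ℝ X :=
    { carrier := closure (Set.range g)
      zero_mem' := subset_closure hzero
      add_mem' := by
        intro a b ha hb
        let A : AddSubmonoid X :=
          { carrier := Set.range g
            zero_mem' := hzero
            add_mem' := fun hx hy => hadd _ hx _ hy }
        exact A.topologicalClosure.add_mem ha hb
      smul_mem' := by
        intro c x hx
        have hx' : x ∈ closure (Set.range g) := hx
        have h1 : c • x ∈ closure ((c • ·) '' Set.range g) :=
          mem_closure_image (by fun_prop) hx'
        have h2 : (c • ·) '' Set.range g ⊆ closure (Set.range g) := by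
          rintro _ ⟨y, hy, rfl⟩
          exact hsmul' c y hy
        exact closure_minimal h2 isClosed_closure h1 }
  refine ⟨Set.range g, ?_, ?_⟩
  · have hSM : S ⊆ (M : Set X) := by
      intro s hs
      refine subset_closure ⟨[(ULift.up 1, ⟨s, hs⟩)], ?_⟩
      simp [hg]
    exact Submodule.span_le.2 hSM
  · refine (Cardinal.mk_range_le).trans ?_
    rcases isEmpty_or_nonempty (ULift.{u} ℚ × S) with h | h
    · exact (Cardinal.mk_le_aleph0).trans (le_max_left _ _)
    · rw [Cardinal.mk_list_eq_max_mk_aleph0]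
      refine max_le ?_ (le_max_left _ _)
      have hp : #(ULift.{u} ℚ × ↥S) = ℵ₀ * #↥S := by
        rw [Cardinal.mk_prod, Cardinal.lift_id, Cardinal.lift_id, Cardinal.mk_eq_aleph0]
      rw [hp]
      calc ℵ₀ * #↥S ≤ max ℵ₀ #↥S * max ℵ₀ #↥S :=
            mul_le_mul' (le_max_left _ _) (le_max_right _ _)
        _ = max ℵ₀ #↥S := Cardinal.mul_eq_self (le_max_left _ _)

end Aux

/-- If a Banach space `X` has density character `κ`, then the dual unit ball with the
weak* topology contains a strictly increasing well-ordered chain `(U_ξ)_{ξ<κ}` of open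
sets. -/
theorem stmt8 {X : Type*} [NormedAddCommGroup X] [NormedSpace ℝ X] [CompleteSpace X]
    (κ : Cardinal)
    (hdense : ∃ D : Set X, Dense D ∧ Cardinal.mk D = κ)
    (hmin : ∀ D : Set X, Dense D → κ ≤ Cardinal.mk D) :
    ∃ U : Ordinal → Set ({φ : WeakDual ℝ X | ‖WeakDual.toStrongDual φ‖ ≤ 1} : Set _),
      (∀ ξ < κ.ord, IsOpen (U ξ)) ∧
      (∀ ξ ζ : Ordinal, ξ < ζ → ζ < κ.ord → U ξ ⊂ U ζ) := by
  classical
  obtain ⟨D, hD, hDκ⟩ := hdense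
  by_cases hsub : Subsingleton X
  · have hκ1 : κ.ord ≤ 1 := by
      have : κ ≤ 1 := by
        rw [← hDκ]
        exact (Cardinal.mk_set_le D).trans (Cardinal.le_one_iff_subsingleton.2 hsub)
      simpa [Cardinal.ord_one] using Cardinal.ord_le_ord.2 this
    refine ⟨fun _ => ∅, fun _ _ => isOpen_empty, fun ξ ζ hξζ hζ => ?_⟩
    have hζ1 : ζ < 1 := hζ.trans_le hκ1
    rw [Ordinal.lt_one_iff_zero] at hζ1
    exact absurd hξζ (by rw [hζ1]; simp)
  rw [not_subsingleton_iff_nontrivial] at hsub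
  obtain ⟨x0, hx0⟩ := exists_ne (0 : X)
  haveI hinf : Infinite X := Infinite.of_injective _ (smul_left_injective ℝ hx0)
  have hκinf : ℵ₀ ≤ κ := by
    have hDinf : D.Infinite := by
      by_contra h
      rw [Set.not_infinite] at h
      have : (Set.univ : Set X) = D := (hD.closure_eq.symm).trans h.isClosed.closure_eq
      exact absurd (Set.finite_univ_iff.1 (this ▸ h)) (by simpa using Infinite.not_finite)
    haveI := Set.infinite_coe_iff.2 hDinf
    rw [← hDκ]
    exact Cardinal.aleph0_le_mk _
  rcases hκinf.lt_or_eq with hlt | heq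
  · -- uncountable case
    obtain ⟨e⟩ : Nonempty (κ.ord.ToType ≃ D) :=
      Cardinal.eq.1 (by rw [Cardinal.mk_ord_toType κ, hDκ])
    set ι := κ.ord.ToType with hι
    set fv : ι → X := fun a => (e a : X) with hfv
    set Y : ι → Submodule ℝ X :=
      fun a => (Submodule.span ℝ (fv '' Set.Iio a)).topologicalClosure with hYdef
    set T : Set ι := {a | fv a ∉ Y a} with hT
    set Z : Submodule ℝ X := (Submodule.span ℝ (fv '' T)).topologicalClosure with hZ
    have hZclosed : IsClosed (Z : Set X) := Submodule.isClosed_topologicalClosure _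
    have claim1 : ∀ a : ι, fv a ∈ Z := by
      intro a
      induction a using WellFoundedLT.induction with
      | _ a IH =>
        by_cases ha : a ∈ T
        · exact Submodule.le_topologicalClosure _
            (Submodule.subset_span (Set.mem_image_of_mem _ ha))
        · have haY : fv a ∈ Y a := by
            by_contra h
            exact ha h
          have hle : Y a ≤ Z := by
            apply Submodule.topologicalClosure_minimal
            · rw [Submodule.span_le]
              rintro _ ⟨b, hb, rfl⟩
              exact IH b hb
            · exact hZclosed
          exact hle haY
    have hZuniv : (Z : Set X) = Set.univ := by
      apply Set.eq_univ_of_univ_subset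
      have hDZ : D ⊆ (Z : Set X) := by
        intro d hd
        have hfd : fv (e.symm ⟨d, hd⟩) = d := by simp [hfv]
        rw [← hfd]; exact claim1 _
      calc Set.univ = closure D := hD.closure_eq.symm
        _ ⊆ closure (Z : Set X) := closure_mono hDZ
        _ = (Z : Set X) := hZclosed.closure_eq
    obtain ⟨R, hR1, hR2⟩ := aux_small (X := X) (fv '' T)
    have hRdense : Dense R := by
      rw [dense_iff_closure_eq]
      apply Set.eq_univ_of_univ_subset
      have h1 : (Z : Set X) ⊆ closure R := by
        rw [hZ, Submodule.topologicalClosure_coe]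
        exact closure_minimal hR1 isClosed_closure
      rw [← hZuniv]; exact h1
    have hκT : κ ≤ #↥T := by
      by_contra h
      push_neg at h
      have h2 : κ ≤ max ℵ₀ #↥T :=
        (hmin R hRdense).trans (hR2.trans (max_le_max le_rfl Cardinal.mk_image_le))
      exact absurd h2 (not_le.2 (max_lt hlt h))
    have htyp : κ.ord ≤ Ordinal.type ((· < ·) : ↥T → ↥T → Prop) := by
      rw [Cardinal.ord_le, Ordinal.card_type]
      exact hκT
    set en : ∀ ξ : Ordinal, ξ < κ.ord → ↥T :=
      fun ξ h => Ordinal.enum (α := ↥T) (· < ·) ⟨ξ, h.trans_le htyp⟩ with hen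
    have hen_mono : ∀ (ξ ζ : Ordinal) (hξ : ξ < κ.ord) (hζ : ζ < κ.ord), ξ < ζ →
        ((en ξ hξ : ↥T) : ι) < ((en ζ hζ : ↥T) : ι) := by
      intro ξ ζ hξ hζ h
      have h1 : (en ξ hξ) < (en ζ hζ) := by
        rw [hen]
        exact (Ordinal.enum_lt_enum (r := ((· < ·) : ↥T → ↥T → Prop))
          (o₁ := ⟨ξ, hξ.trans_le htyp⟩) (o₂ := ⟨ζ, hζ.trans_le htyp⟩)).2 (Subtype.mk_lt_mk.2 h)
      exact h1
    choose φ hφ1 hφ2 hφ3 using fun a : ↥T =>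
      aux_sep (Y (a : ι)) (Submodule.isClosed_topologicalClosure _) a.2
    have hφB : ∀ a : ↥T, ((φ a : X →L[ℝ] ℝ) : WeakDual ℝ X) ∈
        ({φ : WeakDual ℝ X | ‖WeakDual.toStrongDual φ‖ ≤ 1} : Set _) := fun a => hφ1 a
    set w : ↥T → ({φ : WeakDual ℝ X | ‖WeakDual.toStrongDual φ‖ ≤ 1} : Set _) :=
      fun a => ⟨_, hφB a⟩ with hwdef
    have hwval : ∀ (a : ↥T) (x : X), ((w a : WeakDual ℝ X)) x = φ a x := fun a x => rfl
    refine ⟨fun ξ => ⋃ (ζ : Ordinal) (h : ζ < κ.ord) (_ : ζ < ξ),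
        {b | φ (en ζ h) (fv ((en ζ h : ↥T) : ι)) / 2 <
          (b : WeakDual ℝ X) (fv ((en ζ h : ↥T) : ι))}, ?_, ?_⟩
    · intro ξ _
      refine isOpen_iUnion fun ζ => isOpen_iUnion fun h => isOpen_iUnion fun _ => ?_
      exact IsOpen.preimage
        ((WeakDual.eval_continuous _).comp continuous_subtype_val) isOpen_Ioi
    · intro ξ ζ hξζ hζ
      have hξ : ξ < κ.ord := hξζ.trans hζ
      have hsub' : (⋃ (β : Ordinal) (h : β < κ.ord) (_ : β < ξ),
            {b : ({φ : WeakDual ℝ X | ‖WeakDual.toStrongDual φ‖ ≤ 1} : Set _) |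
              φ (en β h) (fv ((en β h : ↥T) : ι)) / 2 <
                (b : WeakDual ℝ X) (fv ((en β h : ↥T) : ι))}) ⊆
          ⋃ (β : Ordinal) (h : β < κ.ord) (_ : β < ζ),
            {b | φ (en β h) (fv ((en β h : ↥T) : ι)) / 2 <
              (b : WeakDual ℝ X) (fv ((en β h : ↥T) : ι))} := by
        intro b hb
        simp only [Set.mem_iUnion] at hb ⊢
        obtain ⟨β, h, hβξ, hbV⟩ := hb
        exact ⟨β, h, hβξ.trans hξζ, hbV⟩
      refine (Set.ssubset_iff_of_subset hsub').2 ⟨w (en ξ hξ), ?_, ?_⟩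
      · refine Set.mem_iUnion.2 ⟨ξ, Set.mem_iUnion.2 ⟨hξ, Set.mem_iUnion.2 ⟨hξζ, ?_⟩⟩⟩
        show φ (en ξ hξ) (fv ((en ξ hξ : ↥T) : ι)) / 2 <
          ((w (en ξ hξ) : WeakDual ℝ X)) (fv ((en ξ hξ : ↥T) : ι))
        rw [hwval]
        exact half_lt_self (hφ3 _)
      · intro hmem
        simp only [Set.mem_iUnion] at hmem
        obtain ⟨β, h, hβξ, hbV⟩ := hmem
        have hbV' : φ (en β h) (fv ((en β h : ↥T) : ι)) / 2 <
            φ (en ξ hξ) (fv ((en β h : ↥T) : ι)) := hbV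
        clear hbV
        have hlt' : ((en β h : ↥T) : ι) < ((en ξ hξ : ↥T) : ι) := hen_mono β ξ h hξ hβξ
        have hzero : φ (en ξ hξ) (fv ((en β h : ↥T) : ι)) = 0 := by
          apply hφ2
          exact Submodule.le_topologicalClosure _
            (Submodule.subset_span (Set.mem_image_of_mem _ hlt'))
        rw [hzero] at hbV'
        have := half_pos (hφ3 (en β h))
        linarith
  · -- κ = ℵ₀
    obtain ⟨gd, hgd1, hgdx⟩ := exists_dual_vector ℝ x0 (norm_ne_zero_iff.2 hx0)
    have hx0n : (0:ℝ) < ‖x0‖ := norm_pos_iff.2 hx0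
    have hgx : gd x0 = ‖x0‖ := by exact_mod_cast hgdx
    refine ⟨fun ξ => ⋃ (n : ℕ) (_ : (n : Ordinal) < ξ),
        {b | ((n : ℝ) + 3)⁻¹ * ‖x0‖ < (b : WeakDual ℝ X) x0}, ?_, ?_⟩
    · intro ξ _
      refine isOpen_iUnion fun n => isOpen_iUnion fun _ => ?_
      exact IsOpen.preimage ((WeakDual.eval_continuous x0).comp continuous_subtype_val) isOpen_Ioi
    · intro ξ ζ hξζ hζ
      have hζω : ζ < Ordinal.omega0 := by
        rw [← heq, Cardinal.ord_aleph0] at hζ; exact hζ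
      obtain ⟨n, rfl⟩ := Ordinal.lt_omega0.1 (hξζ.trans hζω)
      have hsub' : (⋃ (m : ℕ) (_ : (m : Ordinal) < (n:Ordinal)),
            {b : ({φ : WeakDual ℝ X | ‖WeakDual.toStrongDual φ‖ ≤ 1} : Set _) |
              ((m : ℝ) + 3)⁻¹ * ‖x0‖ < (b : WeakDual ℝ X) x0}) ⊆
          ⋃ (m : ℕ) (_ : (m : Ordinal) < ζ),
            {b | ((m : ℝ) + 3)⁻¹ * ‖x0‖ < (b : WeakDual ℝ X) x0} := by
        refine Set.iUnion₂_mono' fun m hm => ⟨m, hm.trans hξζ, subset_rfl⟩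
      have hwB : ((((n:ℝ) + 2)⁻¹ • gd : X →L[ℝ] ℝ) : WeakDual ℝ X) ∈
          ({φ : WeakDual ℝ X | ‖WeakDual.toStrongDual φ‖ ≤ 1} : Set _) := by
        show ‖((n:ℝ) + 2)⁻¹ • gd‖ ≤ 1
        rw [norm_smul (((n:ℝ) + 2)⁻¹) gd, hgd1, mul_one, norm_inv, Real.norm_eq_abs,
          abs_of_pos (by positivity)]
        rw [inv_le_one_iff₀]
        right; linarith [Nat.cast_nonneg (α := ℝ) n]
      set w : ({φ : WeakDual ℝ X | ‖WeakDual.toStrongDual φ‖ ≤ 1} : Set _) := ⟨_, hwB⟩ with hw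
      have hwval : (w : WeakDual ℝ X) x0 = ((n:ℝ) + 2)⁻¹ * ‖x0‖ := by
        show (((n:ℝ) + 2)⁻¹ • gd) x0 = _
        rw [ContinuousLinearMap.smul_apply, hgx, smul_eq_mul]
      refine (Set.ssubset_iff_of_subset hsub').2 ⟨w, ?_, ?_⟩
      · refine Set.mem_iUnion.2 ⟨n, Set.mem_iUnion.2 ⟨hξζ, ?_⟩⟩
        show ((n : ℝ) + 3)⁻¹ * ‖x0‖ < (w : WeakDual ℝ X) x0
        rw [hwval]
        have : ((n:ℝ) + 3)⁻¹ < ((n:ℝ) + 2)⁻¹ := by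
          apply inv_strictAnti₀ (by positivity)
          linarith
        exact mul_lt_mul_of_pos_right this hx0n
      · intro hwmem
        simp only [Set.mem_iUnion] at hwmem
        obtain ⟨m, hm, hwm⟩ := hwmem
        have hmn : m < n := by exact_mod_cast hm
        have hwm' : ((m : ℝ) + 3)⁻¹ * ‖x0‖ < ((n:ℝ) + 2)⁻¹ * ‖x0‖ := by
          rw [← hwval]; exact hwm
        have h1 : ((n:ℝ) + 2)⁻¹ ≤ ((m:ℝ) + 3)⁻¹ := by
          apply inv_anti₀ (by positivity)
          have : (m:ℝ) + 1 ≤ n := by exact_mod_cast hmn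
          linarith
        have := mul_le_mul_of_nonneg_right h1 hx0n.le
        linarith
end

section
/- If a Boolean algebra B contains no strictly increasing chain of order type ω₁, then its Stone space cannot be continuously mapped onto the ordinal space [0, ω₁] with the order topology. -/
open Cardinal TopologicalSpace

universe u1 u2 v w

theorem stmt13_aux (B : Type u1) [BooleanAlgebra B]
    (hchain : ¬ ∃ b : Ordinal.{v} → B,
      ∀ α β : Ordinal.{v}, α < β → β < (aleph 1).ord → b α < b β)
    (K_B : Type u2) [TopologicalSpace K_B] [CompactSpace K_B] [T2Space K_B]
    [TotallyDisconnectedSpace K_B] (iso : Clopens K_B ≃o B) :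
    ¬ ∃ f : K_B → Ordinal.{w}, Continuous f ∧ Set.range f = Set.Iic (aleph 1).ord := by
  rintro ⟨f, hf, hrange⟩
  apply hchain
  have hclopen : ∀ α : Ordinal.{w}, IsClopen (f ⁻¹' Set.Iic α) := fun α => by
    constructor
    · exact isClosed_Iic.preimage hf
    · have h : Set.Iic α = Set.Iio (Order.succ α) := by
        ext y; simp [Order.lt_succ_iff]
      rw [h]
      exact isOpen_Iio.preimage hf
  have key1 : Ordinal.lift.{w, v} ((aleph 1).ord) = Ordinal.lift.{v, w} ((aleph 1).ord) := by
    simp [Cardinal.lift_ord, Cardinal.lift_aleph]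
  have down : ∀ α : Ordinal.{v}, α < (aleph 1).ord →
      ∃ α' : Ordinal.{w}, Ordinal.lift.{v, w} α' = Ordinal.lift.{w, v} α ∧ α' < (aleph 1).ord := by
    intro α hα
    have h1 : Ordinal.lift.{w, v} α < Ordinal.lift.{w, v} ((aleph 1).ord) :=
      Ordinal.lift_lt.2 hα
    rw [key1] at h1
    obtain ⟨α', hα'⟩ := Ordinal.mem_range_lift_of_le h1.le
    refine ⟨α', hα', ?_⟩
    rw [← Ordinal.lift_lt.{v, w}, hα']
    exact h1
  obtain ⟨g, hg⟩ : ∃ g : Ordinal.{v} → Ordinal.{w}, ∀ α, α < (aleph 1).ord →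
      Ordinal.lift.{v, w} (g α) = Ordinal.lift.{w, v} α ∧ g α < (aleph 1).ord :=
    ⟨fun α => if h : α < (aleph 1).ord then (down α h).choose else 0,
      fun α h => by beta_reduce; rw [dif_pos h]; exact (down α h).choose_spec⟩
  refine ⟨fun α => iso ⟨f ⁻¹' Set.Iic (g α), hclopen _⟩, fun α β hab hb => ?_⟩
  obtain ⟨h1α, h2α⟩ := hg α (hab.trans hb)
  obtain ⟨h1β, h2β⟩ := hg β hb
  have hgab : g α < g β := by
    rw [← Ordinal.lift_lt.{v, w}, h1α, h1β]
    exact Ordinal.lift_lt.2 hab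
  rw [OrderIso.lt_iff_lt]
  obtain ⟨x, hx⟩ : g β ∈ Set.range f := by rw [hrange]; exact h2β.le
  rw [SetLike.lt_iff_le_and_exists]
  refine ⟨fun y hy => le_trans hy hgab.le, x, ?_, ?_⟩
  · show f x ∈ Set.Iic (g β)
    simp [hx]
  · show f x ∉ Set.Iic (g α)
    simp [hx, not_le, hgab]

/-- If a Boolean algebra `B` (with Stone space `K_B`) has no strictly increasing chain
of order type ω₁, then `K_B` admits no continuous surjection onto the ordinal interval
`[0, ω₁]` with the order topology. -/
theorem stmt13 (B : Type*) [BooleanAlgebra B]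
    (hchain : ¬ ∃ b : Ordinal → B,
      ∀ α β : Ordinal, α < β → β < (aleph 1).ord → b α < b β)
    (K_B : Type*) [TopologicalSpace K_B] [CompactSpace K_B] [T2Space K_B]
    [TotallyDisconnectedSpace K_B] (iso : Clopens K_B ≃o B) :
    ¬ ∃ f : K_B → Ordinal, Continuous f ∧ Set.range f = Set.Iic (aleph 1).ord := by
  exact stmt13_aux B hchain K_B iso
end

section
/- If K_A is the Stone space of a countable Boolean algebra A and C(K_A) is isometrically universal for all separable Banach spaces, then K_A is not scattered; consequently A contains a free (independent) subalgebra on countably infinitely many generators. -/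
open TopologicalSpace RealInnerProductSpace Set



local notation "E2" => EuclideanSpace ℝ (Fin 2)

lemma aux_uncountable {K : Type} [TopologicalSpace K] [CompactSpace K]
    (T : E2 →ₗᵢ[ℝ] C(K, ℝ)) : Uncountable K := by
  classical
  -- K is nonempty
  have hne : Nonempty K := by
    by_contra h
    haveI : IsEmpty K := not_nonempty_iff.mp h
    have h1 : ‖T (EuclideanSpace.single 0 1)‖ ≤ 0 :=
      (ContinuousMap.norm_le _ le_rfl).mpr fun x => (IsEmpty.false x).elim
    rw [T.norm_map, EuclideanSpace.norm_single] at h1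
    norm_num at h1
  let e : Fin 2 → E2 := fun i => EuclideanSpace.single i 1
  have hrepr : ∀ v : E2, v = v 0 • e 0 + v 1 • e 1 := by
    intro v
    ext i
    fin_cases i <;>
      simp [e, EuclideanSpace.single_apply, PiLp.add_apply, PiLp.smul_apply]
  let g : K → E2 := fun x => !₂[T (e 0) x, T (e 1) x]
  have hkey : ∀ (x : K) (v : E2), T v x = ⟪g x, v⟫ := by
    intro x v
    rw [PiLp.inner_apply]
    conv_lhs => rw [hrepr v]
    simp [Fin.sum_univ_two, g, RCLike.inner_apply, map_add, map_smul,
      ContinuousMap.add_apply, ContinuousMap.smul_apply, smul_eq_mul]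
  have hglt : ∀ x : K, ‖g x‖ ≤ 1 := by
    intro x
    have h2 : ‖g x‖ * ‖g x‖ = T (g x) x := by
      rw [← real_inner_self_eq_norm_mul_norm, hkey x (g x)]
    have h3 : T (g x) x ≤ ‖g x‖ := by
      calc T (g x) x ≤ ‖T (g x) x‖ := le_abs_self _
        _ ≤ ‖T (g x)‖ := (T (g x)).norm_coe_le_norm x
        _ = ‖g x‖ := T.norm_map _
    nlinarith [norm_nonneg (g x)]
  let y : ℝ → E2 := fun t => !₂[1, t]
  have hy0 : ∀ t, y t 0 = (1 : ℝ) := fun t => rfl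
  have hy1 : ∀ t, y t 1 = t := fun t => rfl
  have hyne : ∀ t, (y t) ≠ 0 := by
    intro t h
    have : y t 0 = 0 := by rw [h]; rfl
    rw [hy0] at this; norm_num at this
  have main : ∀ t : ℝ, ∃ (x : K) (c : ℝ), c ≠ 0 ∧ g x = c • y t := by
    intro t
    have hypos : 0 < ‖y t‖ := norm_pos_iff.mpr (hyne t)
    -- the norm of `T (y t)` is attained
    obtain ⟨x, -, hx⟩ := IsCompact.exists_isMaxOn (isCompact_univ (X := K))
      Set.univ_nonempty ((continuous_abs.comp (T (y t)).continuous)).continuousOn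
    have hfx : ‖T (y t)‖ = |T (y t) x| := by
      refine le_antisymm ?_ ?_
      · exact (ContinuousMap.norm_le _ (abs_nonneg _)).mpr fun x' => by
          simpa [Real.norm_eq_abs] using hx (Set.mem_univ x')
      · simpa [Real.norm_eq_abs] using (T (y t)).norm_coe_le_norm x
    have habs : |⟪g x, y t⟫| = ‖y t‖ := by
      rw [← hkey, ← hfx, T.norm_map]
    have hgx1 : ‖g x‖ = 1 := by
      have h4 := abs_real_inner_le_norm (g x) (y t)
      rw [habs] at h4
      have h5 : 1 ≤ ‖g x‖ := by
        by_contra h6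
        push_neg at h6
        nlinarith
      linarith [hglt x]
    rcases (abs_eq (norm_nonneg (y t))).mp habs with hcase | hcase
    · have h7 : ⟪g x, y t⟫ = ‖g x‖ * ‖y t‖ := by rw [hgx1, one_mul, hcase]
      have h8 := inner_eq_norm_mul_iff_real.mp h7
      rw [hgx1, one_smul] at h8
      exact ⟨x, ‖y t‖⁻¹, inv_ne_zero (ne_of_gt hypos),
        ((inv_smul_eq_iff₀ (ne_of_gt hypos)).mpr h8.symm).symm⟩
    · have h7 : ⟪g x, -(y t)⟫ = ‖g x‖ * ‖-(y t)‖ := by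
        rw [inner_neg_right, hcase, hgx1, one_mul, norm_neg, neg_neg]
      have h8 := inner_eq_norm_mul_iff_real.mp h7
      rw [hgx1, one_smul, norm_neg] at h8
      refine ⟨x, -‖y t‖⁻¹, neg_ne_zero.mpr (inv_ne_zero (ne_of_gt hypos)), ?_⟩
      have h10 : g x = ‖y t‖⁻¹ • (-(y t)) :=
        ((inv_smul_eq_iff₀ (ne_of_gt hypos)).mpr h8.symm).symm
      rw [h10, smul_neg, ← neg_smul]
  choose F c hc hg using main
  have hFinj : Function.Injective F := by
    intro t s hts
    have h9 : c t • y t = c s • y s := by rw [← hg t, hts, hg s]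
    have h0 : (c t • y t) 0 = (c s • y s) 0 := by rw [h9]
    rw [PiLp.smul_apply, PiLp.smul_apply, hy0, hy0, smul_eq_mul, smul_eq_mul,
      mul_one, mul_one] at h0
    have h1 : (c t • y t) 1 = (c s • y s) 1 := by rw [h9]
    rw [PiLp.smul_apply, PiLp.smul_apply, hy1, hy1, smul_eq_mul, smul_eq_mul, h0] at h1
    exact mul_left_cancel₀ (h0 ▸ hc t) h1
  exact hFinj.uncountable


lemma aux_clopen_sep {X : Type} [TopologicalSpace X] [CompactSpace X] [T2Space X]
    [TotallyDisconnectedSpace X] {s t : Set X} (hs : IsCompact s) (ht : IsCompact t)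
    (hd : Disjoint s t) : ∃ U : Set X, IsClopen U ∧ s ⊆ U ∧ Disjoint U t := by
  classical
  have htc : IsOpen tᶜ := ht.isClosed.isOpen_compl
  have hV : ∀ x : X, x ∈ s → ∃ V : Set X, IsClopen V ∧ x ∈ V ∧ V ⊆ tᶜ := by
    intro x hx
    exact compact_exists_isClopen_in_isOpen htc (disjoint_left.mp hd hx)
  choose! V hV1 hV2 hV3 using hV
  obtain ⟨F, hFs, hFcov⟩ := hs.elim_nhds_subcover V
    (fun x hx => ((hV1 x hx).2).mem_nhds (hV2 x hx))
  refine ⟨⋃ x ∈ F, V x, isClopen_biUnion_finset (fun x hx => hV1 x (hFs x hx)), hFcov, ?_⟩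
  rw [disjoint_left]
  rintro a ha hat
  obtain ⟨x, hxF, hxa⟩ := Set.mem_iUnion₂.mp ha
  exact hV3 x (hFs x hxF) hxa hat

lemma aux_singleton_not_open (a : ℕ → Bool) : ¬ IsOpen ({a} : Set (ℕ → Bool)) := by
  intro h
  obtain ⟨I, u, h1, hsub⟩ := isOpen_pi_iff.mp h a rfl
  obtain ⟨n, hn⟩ := I.exists_notMem
  have hb : Function.update a n (!a n) ∈ (I : Set ℕ).pi u := by
    intro i hi
    rw [Function.update_of_ne (by rintro rfl; exact hn hi)]
    exact (h1 i hi).2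
  have hba : Function.update a n (!a n) = a := hsub hb
  have := congrFun hba n
  rw [Function.update_self] at this
  simp at this


/-- A countable Boolean algebra `A` with Stone space `K_A` such that `C(K_A)` is
isometrically universal for separable Banach spaces: then `K_A` is not scattered, and
`A` contains an independent family indexed by `ℕ` (i.e. a free subalgebra on countably
infinitely many generators). -/
theorem stmt14 (A : Type) [BooleanAlgebra A] [Countable A]
    (K_A : Type) [TopologicalSpace K_A] [CompactSpace K_A] [T2Space K_A]
    [TotallyDisconnectedSpace K_A] (iso : Clopens K_A ≃o A)
    (huniv : ∀ (Y : Type) [NormedAddCommGroup Y] [NormedSpace ℝ Y] [CompleteSpace Y]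
      [SeparableSpace Y], Nonempty (Y →ₗᵢ[ℝ] C(K_A, ℝ))) :
    (¬ ∀ S : Set K_A, S.Nonempty → ∃ x ∈ S, ∃ U : Set K_A, IsOpen U ∧ U ∩ S = {x}) ∧
    (∃ f : ℕ → A, ∀ s t : Finset ℕ, Disjoint s t →
      (s.inf f) ⊓ (t.inf fun i => (f i)ᶜ) ≠ ⊥) := by
  classical
  haveI : Countable (Clopens K_A) := Countable.of_equiv A iso.toEquiv.symm
  haveI hsc : SecondCountableTopology K_A := by
    refine IsTopologicalBasis.secondCountableTopology isTopologicalBasis_isClopen ?_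
    have h : {s : Set K_A | IsClopen s} = Set.range (fun V : Clopens K_A => (V : Set K_A)) := by
      ext s
      constructor
      · intro hs; exact ⟨⟨s, hs⟩, rfl⟩
      · rintro ⟨V, rfl⟩; exact V.isClopen
    rw [h]
    exact Set.countable_range _
  obtain ⟨T⟩ := huniv (EuclideanSpace ℝ (Fin 2))
  haveI hUnc : Uncountable K_A := aux_uncountable T
  haveI : MetrizableSpace K_A := inferInstance
  haveI : PolishSpace K_A := by
    letI := metrizableSpaceMetric K_A
    infer_instance
  obtain ⟨f, -, hfc, hfinj⟩ :=
    (isClosed_univ : IsClosed (Set.univ : Set K_A)).exists_nat_bool_injection_of_not_countable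
      (by rw [Set.not_countable_univ_iff]; exact hUnc)
  constructor
  · -- not scattered
    intro hscat
    obtain ⟨x, hxS, U, hU, hUS⟩ := hscat (Set.range f) ⟨f (fun _ => false), mem_range_self _⟩
    obtain ⟨a, rfl⟩ := hxS
    apply aux_singleton_not_open a
    have hpre : f ⁻¹' U = {a} := by
      ext b
      simp only [mem_preimage, mem_singleton_iff]
      constructor
      · intro hb
        have hmem : f b ∈ U ∩ range f := ⟨hb, mem_range_self b⟩
        rw [hUS] at hmem
        exact hfinj hmem
      · rintro rfl
        have h5 : f b ∈ U ∩ range f := by rw [hUS]; rfl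
        exact h5.1
    rw [← hpre]
    exact hU.preimage hfc
  · -- independent family
    have hclosed : ∀ (v : Bool) (n : ℕ), IsCompact (f '' {b : ℕ → Bool | b n = v}) := by
      intro v n
      refine (IsClosed.isCompact ?_).image hfc
      exact isClosed_eq (continuous_apply n) continuous_const
    have hdisj : ∀ n : ℕ,
        Disjoint (f '' {b : ℕ → Bool | b n = true}) (f '' {b : ℕ → Bool | b n = false}) := by
      intro n
      rw [Set.disjoint_image_iff hfinj]
      rw [Set.disjoint_left]
      intro b hb1 hb2
      rw [Set.mem_setOf_eq] at hb1 hb2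
      rw [hb1] at hb2
      exact Bool.noConfusion hb2
    choose U hUclop hUsub hUdisj using fun n =>
      aux_clopen_sep (hclosed true n) (hclosed false n) (hdisj n)
    set W : ℕ → Clopens K_A := fun n => ⟨U n, hUclop n⟩ with hW
    refine ⟨fun n => iso (W n), ?_⟩
    intro s t hst hbot
    -- transfer to Clopens
    have h1 : iso.symm ((s.inf fun n => iso (W n)) ⊓ (t.inf fun i => (iso (W i))ᶜ))
        = (s.inf W) ⊓ (t.inf fun i => (W i)ᶜ) := by
      rw [map_inf, map_finset_inf, map_finset_inf]
      congr 1
      · exact Finset.inf_congr rfl fun i _ => iso.symm_apply_apply _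
      · refine Finset.inf_congr rfl fun i _ => ?_
        show iso.symm ((iso (W i))ᶜ) = (W i)ᶜ
        rw [map_compl' iso.symm, iso.symm_apply_apply]
    have h2 : (s.inf W) ⊓ (t.inf fun i => (W i)ᶜ) = (⊥ : Clopens K_A) := by
      rw [← h1, hbot, map_bot]
    -- produce a point in this clopen set
    set b : ℕ → Bool := fun n => decide (n ∈ s) with hb
    have hmem : ∀ (u : Finset ℕ) (g : ℕ → Clopens K_A) (x : K_A),
        (∀ i ∈ u, x ∈ (g i : Set K_A)) → x ∈ ((u.inf g : Clopens K_A) : Set K_A) := by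
      intro u g x h
      induction u using Finset.cons_induction with
      | empty => simp
      | cons a u ha ih =>
        rw [Finset.inf_cons]
        exact ⟨h a (Finset.mem_cons_self a u), ih fun i hi => h i (Finset.mem_cons_of_mem hi)⟩
    have hxmem : f b ∈ (((s.inf W) ⊓ (t.inf fun i => (W i)ᶜ) : Clopens K_A) : Set K_A) := by
      refine ⟨hmem s W (f b) fun i hi => ?_, hmem t (fun i => (W i)ᶜ) (f b) fun i hi => ?_⟩
      · exact hUsub i ⟨b, by simp [hb, hi], rfl⟩
      · have hns : i ∉ s := Finset.disjoint_right.mp hst hi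
        have : f b ∈ f '' {b' : ℕ → Bool | b' i = false} := ⟨b, by simp [hb, hns], rfl⟩
        exact Set.disjoint_right.mp (hUdisj i) this
    rw [h2] at hxmem
    exact hxmem
end

section
/- Let X be a Banach space and (V_α)_{α<ω₁} a strictly increasing family of weak*-open subsets of a weak*-closed convex set F ⊆ B_{X*} with weak*-closure(V_α) ⊆ V_β for α < β, and set V = ⋃_{α<ω₁} V_α. If F \ V is nonempty, then there exists a point x in the weak closure of F \ V that also lies in the weak closure of V. -/
open Cardinal

/-- The weak closure (with respect to the weak topology `σ(X*, X**)`) of a set of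
functionals on a Banach space `X`, the functionals being given in the weak* dual. -/
noncomputable def weakClosure {X : Type*} [NormedAddCommGroup X] [NormedSpace ℝ X]
    (S : Set (WeakDual ℝ X)) : Set (WeakDual ℝ X) :=
  letI j : WeakDual ℝ X → WeakSpace ℝ (StrongDual ℝ X) :=
    fun φ => toWeakSpace ℝ (StrongDual ℝ X) (WeakDual.toStrongDual φ)
  j ⁻¹' closure (j '' S)

/-- In the proof of Proposition 3.1: if `F` is a weak*-closed convex subset of the dual
ball of a Banach space, `(V_α)_{α<ω₁}` is a strictly increasing chain of relatively
weak*-open subsets of `F` with `closure (V_α) ⊆ V_β` for `α < β < ω₁`, and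
`V = ⋃_{α<ω₁} V_α` does not cover `F`, then some point lies simultaneously in the weak
closure of `F \ V` and in the weak closure of `V`. -/
theorem stmt19 {X : Type*} [NormedAddCommGroup X] [NormedSpace ℝ X] [CompleteSpace X]
    (F : Set (WeakDual ℝ X))
    (hFB : F ⊆ {φ : WeakDual ℝ X | ‖WeakDual.toStrongDual φ‖ ≤ 1})
    (hFclosed : IsClosed F) (hFconv : Convex ℝ F)
    (V : Ordinal → Set (WeakDual ℝ X))
    (hVF : ∀ α < (aleph 1).ord, V α ⊆ F)
    (hopen : ∀ α < (aleph 1).ord, ∃ W : Set (WeakDual ℝ X), IsOpen W ∧ V α = W ∩ F)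
    (hmono : ∀ α β : Ordinal, α < β → β < (aleph 1).ord → closure (V α) ⊆ V β)
    (hstrict : ∀ α β : Ordinal, α < β → β < (aleph 1).ord → V α ⊂ V β)
    (hne : (F \ ⋃ α ∈ Set.Iio (aleph 1).ord, V α).Nonempty) :
    ∃ x : WeakDual ℝ X,
      x ∈ weakClosure (F \ ⋃ α ∈ Set.Iio (aleph 1).ord, V α) ∧
      x ∈ weakClosure (⋃ α ∈ Set.Iio (aleph 1).ord, V α) := by
  classical
  set U : Set (WeakDual ℝ X) := ⋃ α ∈ Set.Iio (aleph 1).ord, V α with hU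
  let j : WeakDual ℝ X → WeakSpace ℝ (StrongDual ℝ X) :=
    fun φ => toWeakSpace ℝ (StrongDual ℝ X) (WeakDual.toStrongDual φ)
  haveI : ContinuousSMul ℝ (WeakSpace ℝ (StrongDual ℝ X)) :=
    WeakBilin.instContinuousSMul _
  -- `j '' F` is convex, hence preconnected
  have hconn : IsPreconnected (j '' F) := by
    have hlin : IsLinearMap ℝ j := by constructor <;> intros <;> rfl
    exact (hFconv.is_linear_image hlin).isPreconnected
  -- `U` is nonempty
  have hUne : U.Nonempty := by
    have h01 : (0 : Ordinal) < 1 := zero_lt_one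
    have h1 : (1 : Ordinal) < (aleph 1).ord := by
      calc (1 : Ordinal) < Ordinal.omega0 := Ordinal.one_lt_omega0
        _ = (aleph 0).ord := by rw [Cardinal.aleph_zero, Cardinal.ord_aleph0]
        _ < (aleph 1).ord := (Cardinal.ord_lt_ord).2 (Cardinal.aleph_lt_aleph.2 zero_lt_one)
    obtain ⟨y, hy⟩ := Set.nonempty_of_ssubset (hstrict 0 1 h01 h1)
    exact ⟨y, Set.mem_biUnion h1 hy.1⟩
  -- apply preconnectedness to the two closed sets
  obtain ⟨y, hyF, hyA, hyB⟩ :=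
    isPreconnected_closed_iff.1 hconn (closure (j '' (F \ U))) (closure (j '' U))
      isClosed_closure isClosed_closure
      (by
        intro z hz
        obtain ⟨w, hw, rfl⟩ := hz
        by_cases hwU : w ∈ U
        · exact Or.inr (subset_closure ⟨w, hwU, rfl⟩)
        · exact Or.inl (subset_closure ⟨w, ⟨hw, hwU⟩, rfl⟩))
      (by
        obtain ⟨w, hw⟩ := hne
        exact ⟨j w, ⟨w, hw.1, rfl⟩, subset_closure ⟨w, hw, rfl⟩⟩)
      (by
        obtain ⟨w, hw⟩ := hUne
        have hwF : w ∈ F := by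
          obtain ⟨_, ⟨α, rfl⟩, hs⟩ := hw
          obtain ⟨_, ⟨hα, rfl⟩, hwα⟩ := hs
          exact hVF α hα hwα
        exact ⟨j w, ⟨w, hwF, rfl⟩, subset_closure ⟨w, hw, rfl⟩⟩)
  obtain ⟨x, _, rfl⟩ := hyF
  exact ⟨x, hyA, hyB⟩
end
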